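/- Let μ, ν be probability measures on ℝ with finite second moments, ρ a reference probability measure on ℝ without atoms among its pushforward, and let μ̂ = F_μ^{[-1]} ∘ F_ρ denote the cumulative distribution transform. Then ‖μ̂ − ν̂‖_{L²(ρ)} equals the Wasserstein-2 distance W₂(μ, ν). -/

import Mathlib

open MeasureTheory Set Filter Topology
open scoped ENNReal

noncomputable section

/-- The cumulative distribution function `F_μ(t) = μ((−∞,t])` of a measure on `ℝ`. -/
noncomputable def cdf (ν : Measure ℝ) (t : ℝ) : ℝ := (ν (Set.Iic t)).toReal

/-- The quantile function (generalized inverse) `F_μ^{[-1]}(t) = inf {s | F_μ(s) > t}`. -/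
noncomputable def quantile (ν : Measure ℝ) (t : ℝ) : ℝ := sInf {s : ℝ | t < cdf ν s}

/-- The cumulative distribution transform `μ̂ = F_μ^{[-1]} ∘ F_ρ` with respect to a reference
measure `ρ`. -/
noncomputable def cdt (ν ρ : Measure ℝ) (t : ℝ) : ℝ := quantile ν (cdf ρ t)

/-- The squared Wasserstein-2 cost between `μ` and `ν`: the infimal quadratic transport cost
over all couplings of `μ` and `ν`. -/
noncomputable def W2sq (μ ν : Measure ℝ) : ℝ≥0∞ :=
  sInf {c : ℝ≥0∞ | ∃ π : Measure (ℝ × ℝ), π.map Prod.fst = μ ∧ π.map Prod.snd = ν ∧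
    c = ∫⁻ p : ℝ × ℝ, ENNReal.ofReal ((p.1 - p.2) ^ 2) ∂π}

-- link to mathlib cdf
lemma cdf_eq (ν : Measure ℝ) [IsProbabilityMeasure ν] (t : ℝ) :
    cdf ν t = ProbabilityTheory.cdf ν t := (ProbabilityTheory.cdf_eq_real ν t).symm

lemma cdf_mono (ν : Measure ℝ) [IsProbabilityMeasure ν] : Monotone (cdf ν) := by
  intro a b hab
  rw [cdf_eq, cdf_eq]
  exact ProbabilityTheory.monotone_cdf ν hab

lemma cdf_nonneg (ν : Measure ℝ) [IsProbabilityMeasure ν] (t : ℝ) : 0 ≤ cdf ν t :=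
  ENNReal.toReal_nonneg

lemma cdf_le_one (ν : Measure ℝ) [IsProbabilityMeasure ν] (t : ℝ) : cdf ν t ≤ 1 := by
  rw [cdf_eq]; exact ProbabilityTheory.cdf_le_one ν t

lemma ofReal_cdf (ν : Measure ℝ) [IsProbabilityMeasure ν] (t : ℝ) :
    ENNReal.ofReal (cdf ν t) = ν (Set.Iic t) := by
  rw [cdf_eq]; exact ProbabilityTheory.ofReal_cdf ν t

lemma cdf_tendsto_atBot (ν : Measure ℝ) [IsProbabilityMeasure ν] :
    Tendsto (cdf ν) atBot (𝓝 0) := by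
  have := ProbabilityTheory.tendsto_cdf_atBot ν
  exact this.congr fun x => (cdf_eq ν x).symm

lemma cdf_tendsto_atTop (ν : Measure ℝ) [IsProbabilityMeasure ν] :
    Tendsto (cdf ν) atTop (𝓝 1) := by
  have := ProbabilityTheory.tendsto_cdf_atTop ν
  exact this.congr fun x => (cdf_eq ν x).symm

lemma exists_cdf_lt (ν : Measure ℝ) [IsProbabilityMeasure ν] {p : ℝ} (hp : 0 < p) :
    ∃ s₀ : ℝ, ∀ s ≤ s₀, cdf ν s < p := by
  have h := (cdf_tendsto_atBot ν).eventually (eventually_lt_nhds hp)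
  rw [eventually_atBot] at h
  exact h

lemma exists_lt_cdf (ν : Measure ℝ) [IsProbabilityMeasure ν] {p : ℝ} (hp : p < 1) :
    ∃ s : ℝ, p < cdf ν s := by
  have h := (cdf_tendsto_atTop ν).eventually (eventually_gt_nhds hp)
  exact h.exists

-- right continuity: if p ≤ cdf ν y for all y > x then p ≤ cdf ν x
lemma le_cdf_of_forall_lt (ν : Measure ℝ) [IsProbabilityMeasure ν] {p x : ℝ}
    (h : ∀ y, x < y → p ≤ cdf ν y) : p ≤ cdf ν x := by
  have hc : ContinuousWithinAt (ProbabilityTheory.cdf ν) (Set.Ici x) x :=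
    (ProbabilityTheory.cdf ν).right_continuous x
  have hc' : Tendsto (ProbabilityTheory.cdf ν) (𝓝[>] x) (𝓝 (ProbabilityTheory.cdf ν x)) :=
    hc.tendsto.mono_left (nhdsWithin_mono x Set.Ioi_subset_Ici_self)
  rw [cdf_eq]
  refine ge_of_tendsto hc' ?_
  filter_upwards [self_mem_nhdsWithin] with y hy
  rw [← cdf_eq]
  exact h y hy


/-- Key lemma: a down-closed set squeezed between `{cdf ρ < c}` and `{cdf ρ ≤ c}` has
measure `c`, when `ρ` is an atomless probability measure. -/
lemma measure_downSet (ρ : Measure ℝ) [IsProbabilityMeasure ρ] [NullSingletonClass ρ]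
    {c : ℝ} (hc1 : c ≤ 1) {S : Set ℝ}
    (hdown : ∀ a b, a ≤ b → b ∈ S → a ∈ S)
    (h1 : ∀ t, cdf ρ t < c → t ∈ S) (h2 : ∀ t, t ∈ S → cdf ρ t ≤ c) :
    ρ S = ENNReal.ofReal c := by
  by_cases hb : BddAbove S
  · rcases S.eq_empty_or_nonempty with hS | hS
    · -- S empty : c ≤ 0
      have hc0 : c ≤ 0 := by
        have hev : ∀ t : ℝ, c ≤ cdf ρ t := by
          intro t
          by_contra h
          exact absurd (h1 t (lt_of_not_ge h)) (by simp [hS])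
        exact ge_of_tendsto (cdf_tendsto_atBot ρ) (Eventually.of_forall hev)
      simp [hS, ENNReal.ofReal_eq_zero.2 hc0]
    · have hc0 : 0 ≤ c := le_trans (cdf_nonneg ρ hS.choose) (h2 _ hS.choose_spec)
      set a := sSup S with ha
      have hIio : Set.Iio a ⊆ S := by
        intro t ht
        obtain ⟨u, huS, htu⟩ := exists_lt_of_lt_csSup hS ht
        exact hdown t u htu.le huS
      have hIic : S ⊆ Set.Iic a := fun t ht => le_csSup hb ht
      have hae : ρ (Set.Iio a) = ρ (Set.Iic a) := by
        rw [← measure_congr (Iio_ae_eq_Iic (μ := ρ) (a := a))]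
      have hρS : ρ S = ρ (Set.Iic a) := by
        refine le_antisymm (measure_mono hIic) ?_
        rw [← hae]; exact measure_mono hIio
      rw [hρS, ← ofReal_cdf]
      congr 1
      -- cdf ρ a = c
      have hle : cdf ρ a ≤ c := by
        have hun : Set.Iio a = ⋃ n : ℕ, Set.Iic (a - 1/(n+1)) := by
          ext t
          simp only [Set.mem_Iio, Set.mem_iUnion, Set.mem_Iic]
          constructor
          · intro ht
            obtain ⟨n, hn⟩ := exists_nat_one_div_lt (sub_pos.2 ht)
            exact ⟨n, by linarith⟩
          · rintro ⟨n, hn⟩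
            have : (0:ℝ) < 1/(n+1) := by positivity
            linarith
        have hmono : Monotone (fun n : ℕ => Set.Iic (a - 1/(n+1))) := by
          intro m n hmn
          apply Set.Iic_subset_Iic.2
          have h1 : (1:ℝ)/(n+1) ≤ 1/(m+1) := by
            apply one_div_le_one_div_of_le (by positivity)
            exact_mod_cast by omega
          linarith
        have : ρ (Set.Iio a) ≤ ENNReal.ofReal c := by
          rw [hun, hmono.measure_iUnion]
          refine iSup_le fun n => ?_
          rw [← ofReal_cdf]
          refine ENNReal.ofReal_le_ofReal ?_
          refine h2 _ (hIio ?_)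
          simp only [Set.mem_Iio]
          have : (0:ℝ) < 1/(n+1) := by positivity
          linarith
        have h3 : cdf ρ a = (ρ (Set.Iio a)).toReal := by
          unfold cdf; rw [← hae]
        rw [h3]
        calc (ρ (Set.Iio a)).toReal ≤ (ENNReal.ofReal c).toReal :=
              ENNReal.toReal_mono ENNReal.ofReal_ne_top this
          _ = c := ENNReal.toReal_ofReal hc0
      have hge : c ≤ cdf ρ a := by
        refine le_cdf_of_forall_lt ρ fun y hy => ?_
        by_contra h
        have hyS : y ∈ S := h1 y (lt_of_not_ge h)
        exact absurd (le_csSup hb hyS) (not_le.2 hy)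
      linarith
  · -- not bdd above : S = univ and c = 1
    have hSuniv : S = Set.univ := by
      ext t
      simp only [Set.mem_univ, iff_true]
      obtain ⟨u, huS, htu⟩ := not_bddAbove_iff.1 hb t
      exact hdown t u htu.le huS
    have h1c : (1:ℝ) ≤ c := by
      exact le_of_tendsto (cdf_tendsto_atTop ρ)
        (Eventually.of_forall fun t => h2 t (hSuniv ▸ Set.mem_univ t))
    have : c = 1 := le_antisymm hc1 h1c
    simp [hSuniv, this]

lemma measure_cdf_lt (ρ : Measure ℝ) [IsProbabilityMeasure ρ] [NullSingletonClass ρ]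
    {c : ℝ} (hc1 : c ≤ 1) : ρ {t | cdf ρ t < c} = ENNReal.ofReal c :=
  measure_downSet ρ hc1 (fun a b hab hb => lt_of_le_of_lt (cdf_mono ρ hab) hb)
    (fun _ h => h) (fun _ h => h.le)

lemma measure_cdf_le (ρ : Measure ℝ) [IsProbabilityMeasure ρ] [NullSingletonClass ρ]
    {c : ℝ} (hc1 : c ≤ 1) : ρ {t | cdf ρ t ≤ c} = ENNReal.ofReal c :=
  measure_downSet ρ hc1 (fun a b hab hb => le_trans (cdf_mono ρ hab) hb)
    (fun _ h => h.le) (fun _ h => h)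

lemma measure_cdf_eq_zero (ρ : Measure ℝ) [IsProbabilityMeasure ρ] [NullSingletonClass ρ] :
    ρ {t | cdf ρ t = 0} = 0 := by
  have h := measure_cdf_le ρ (c := 0) (by norm_num)
  rw [ENNReal.ofReal_zero] at h
  refine measure_mono_null (fun t ht => ?_) h
  simp_all

lemma measure_cdf_eq_one (ρ : Measure ℝ) [IsProbabilityMeasure ρ] [NullSingletonClass ρ] :
    ρ {t | cdf ρ t = 1} = 0 := by
  have h := measure_cdf_lt ρ (c := 1) le_rfl
  rw [ENNReal.ofReal_one] at h
  have hcompl : ρ {t | cdf ρ t < 1}ᶜ = 0 := by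
    have hm : MeasurableSet {t | cdf ρ t < 1} := by
      have : Monotone (cdf ρ) := cdf_mono ρ
      exact measurableSet_lt (this.measurable) measurable_const
    rw [measure_compl hm (measure_ne_top ρ _), h, measure_univ]
    simp
  refine measure_mono_null (fun t ht => ?_) hcompl
  simp only [Set.mem_compl_iff, Set.mem_setOf_eq, not_lt]
  simp only [Set.mem_setOf_eq] at ht
  rw [ht]

noncomputable section P3
variable (μ ρ : Measure ℝ) [IsProbabilityMeasure μ] [IsProbabilityMeasure ρ] [NullSingletonClass ρ]

lemma quantile_mono_on (μ : Measure ℝ) [IsProbabilityMeasure μ] {p q : ℝ}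
    (hp : 0 < p) (hq : q < 1) (hpq : p ≤ q) : quantile μ p ≤ quantile μ q := by
  unfold quantile
  have hsub : {s : ℝ | q < cdf μ s} ⊆ {s : ℝ | p < cdf μ s} :=
    fun s hs => lt_of_le_of_lt hpq hs
  have hne : {s : ℝ | q < cdf μ s}.Nonempty := exists_lt_cdf μ hq
  obtain ⟨s₀, hs₀⟩ := exists_cdf_lt μ hp
  have hbdd : BddBelow {s : ℝ | p < cdf μ s} := by
    refine ⟨s₀, fun s hs => ?_⟩
    by_contra h
    exact absurd (hs₀ s (le_of_not_ge h)) (not_lt.2 (le_of_lt hs))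
  exact csInf_le_csInf hbdd hne hsub

lemma cdt_monotoneOn : MonotoneOn (cdt μ ρ)
    ({t | 0 < cdf ρ t} ∩ {t | cdf ρ t < 1}) := by
  rintro a ⟨ha0, ha1⟩ b ⟨hb0, hb1⟩ hab
  exact quantile_mono_on μ ha0 hb1 (cdf_mono ρ hab)

lemma mid_compl_null : ρ (({t | 0 < cdf ρ t} ∩ {t | cdf ρ t < 1})ᶜ) = 0 := by
  rw [Set.compl_inter]
  refine measure_union_null ?_ ?_
  · refine measure_mono_null (fun t ht => ?_) (measure_cdf_eq_zero ρ)
    simp only [Set.mem_compl_iff, Set.mem_setOf_eq, not_lt] at ht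
    exact le_antisymm ht (cdf_nonneg ρ t)
  · refine measure_mono_null (fun t ht => ?_) (measure_cdf_eq_one ρ)
    simp only [Set.mem_compl_iff, Set.mem_setOf_eq, not_lt] at ht
    exact le_antisymm (cdf_le_one ρ t) ht

lemma cdt_aemeasurable : AEMeasurable (cdt μ ρ) ρ := by
  set M := ({t | 0 < cdf ρ t} ∩ {t | cdf ρ t < 1}) with hM
  have hmeas : MeasurableSet M := by
    have h := (cdf_mono ρ).measurable
    exact (measurableSet_lt measurable_const h).inter (measurableSet_lt h measurable_const)
  have h1 : AEMeasurable (cdt μ ρ) (ρ.restrict M) :=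
    aemeasurable_restrict_of_monotoneOn hmeas (cdt_monotoneOn μ ρ)
  have h2 : ρ.restrict M = ρ :=
    Measure.restrict_eq_self_of_ae_mem (by
      rw [MeasureTheory.ae_iff]
      exact mid_compl_null ρ)
  rwa [h2] at h1

lemma cdt_map : ρ.map (cdt μ ρ) = μ := by
  have ham := cdt_aemeasurable μ ρ
  have : IsProbabilityMeasure (ρ.map (cdt μ ρ)) := Measure.isProbabilityMeasure_map ham
  refine Measure.ext_of_Iic _ _ (fun x => ?_)
  rw [Measure.map_apply_of_aemeasurable ham measurableSet_Iic]
  set c := cdf μ x with hc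
  have hc1 : c ≤ 1 := cdf_le_one μ x
  set S := cdt μ ρ ⁻¹' Set.Iic x with hS
  have hup : S ⊆ {t | cdf ρ t ≤ c} ∪ {t | cdf ρ t = 1} := by
    intro t ht
    rcases eq_or_lt_of_le (cdf_le_one ρ t) with h1 | h1
    · exact Or.inr h1
    · refine Or.inl ?_
      set p := cdf ρ t with hp
      have hne : {s : ℝ | p < cdf μ s}.Nonempty := exists_lt_cdf μ h1
      refine le_cdf_of_forall_lt μ fun y hy => ?_
      have hlt : sInf {s : ℝ | p < cdf μ s} < y := lt_of_le_of_lt ht hy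
      obtain ⟨s, hs, hsy⟩ := exists_lt_of_csInf_lt hne hlt
      exact le_of_lt (lt_of_lt_of_le hs (cdf_mono μ hsy.le))
  have hlow : {t | cdf ρ t < c} ⊆ S ∪ {t | cdf ρ t = 0} := by
    intro t ht
    rcases eq_or_lt_of_le (cdf_nonneg ρ t) with h0 | h0
    · exact Or.inr h0.symm
    · refine Or.inl ?_
      simp only [Set.mem_setOf_eq] at ht
      obtain ⟨s₀, hs₀⟩ := exists_cdf_lt μ h0
      have hbdd : BddBelow {s : ℝ | cdf ρ t < cdf μ s} := by
        refine ⟨s₀, fun s hs => ?_⟩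
        by_contra h
        exact absurd (hs₀ s (le_of_not_ge h)) (not_lt.2 (le_of_lt hs))
      exact csInf_le hbdd ht
  have h1 : ρ S ≤ ENNReal.ofReal c := by
    calc ρ S ≤ ρ ({t | cdf ρ t ≤ c} ∪ {t | cdf ρ t = 1}) := measure_mono hup
      _ ≤ ρ {t | cdf ρ t ≤ c} + ρ {t | cdf ρ t = 1} := measure_union_le _ _
      _ = ENNReal.ofReal c := by rw [measure_cdf_le ρ hc1, measure_cdf_eq_one ρ, add_zero]
  have h2 : ENNReal.ofReal c ≤ ρ S := by
    calc ENNReal.ofReal c = ρ {t | cdf ρ t < c} := (measure_cdf_lt ρ hc1).symm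
      _ ≤ ρ (S ∪ {t | cdf ρ t = 0}) := measure_mono hlow
      _ ≤ ρ S + ρ {t | cdf ρ t = 0} := measure_union_le _ _
      _ = ρ S := by rw [measure_cdf_eq_zero ρ, add_zero]
  rw [le_antisymm h1 h2, hc, ofReal_cdf]

end P3

noncomputable section P4
variable (μ ν ρ : Measure ℝ) [IsProbabilityMeasure μ] [IsProbabilityMeasure ν]
  [IsProbabilityMeasure ρ] [NullSingletonClass ρ]

/-- the monotone (quantile) coupling -/
noncomputable def qcoupling : Measure (ℝ × ℝ) :=
  ρ.map (fun u => (cdt μ ρ u, cdt ν ρ u))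

lemma qcoupling_pair_aemeasurable :
    AEMeasurable (fun u => (cdt μ ρ u, cdt ν ρ u)) ρ :=
  (cdt_aemeasurable μ ρ).prodMk (cdt_aemeasurable ν ρ)

instance : IsProbabilityMeasure (qcoupling μ ν ρ) :=
  Measure.isProbabilityMeasure_map (qcoupling_pair_aemeasurable μ ν ρ)

lemma qcoupling_fst : (qcoupling μ ν ρ).map Prod.fst = μ := by
  rw [qcoupling, AEMeasurable.map_map_of_aemeasurable
    measurable_fst.aemeasurable (qcoupling_pair_aemeasurable μ ν ρ)]
  exact cdt_map μ ρ

lemma qcoupling_snd : (qcoupling μ ν ρ).map Prod.snd = ν := by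
  rw [qcoupling, AEMeasurable.map_map_of_aemeasurable
    measurable_snd.aemeasurable (qcoupling_pair_aemeasurable μ ν ρ)]
  exact cdt_map ν ρ

lemma measure_inter_min_of_upsets_within {M A B : Set ℝ}
    (hA : A ⊆ M) (hB : B ⊆ M)
    (hA' : ∀ a b, a ∈ A → b ∈ M → a ≤ b → b ∈ A)
    (hB' : ∀ a b, a ∈ B → b ∈ M → a ≤ b → b ∈ B) :
    ρ (A ∩ B) = min (ρ A) (ρ B) := by
  have hcomp : A ⊆ B ∨ B ⊆ A := by
    by_contra h
    push_neg at h
    obtain ⟨a, haA, haB⟩ := Set.not_subset.1 h.1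
    obtain ⟨b, hbB, hbA⟩ := Set.not_subset.1 h.2
    rcases le_total a b with hab | hba
    · exact hbA (hA' a b haA (hB hbB) hab)
    · exact haB (hB' b a hbB (hA haA) hba)
  rcases hcomp with h | h
  · rw [Set.inter_eq_left.2 h, min_eq_left (measure_mono h)]
  · rw [Set.inter_eq_right.2 h, min_eq_right (measure_mono h)]

lemma qcoupling_joint (s t : ℝ) :
    qcoupling μ ν ρ {p : ℝ × ℝ | s < p.1 ∧ t < p.2}
      = min (μ (Set.Ioi s)) (ν (Set.Ioi t)) := by
  have hE : MeasurableSet {p : ℝ × ℝ | s < p.1 ∧ t < p.2} :=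
    (measurable_fst measurableSet_Ioi).inter (measurable_snd measurableSet_Ioi)
  rw [qcoupling, Measure.map_apply_of_aemeasurable (qcoupling_pair_aemeasurable μ ν ρ) hE]
  set M := ({u | 0 < cdf ρ u} ∩ {u | cdf ρ u < 1}) with hM
  have hnull : ρ Mᶜ = 0 := mid_compl_null ρ
  set A := {u | s < cdt μ ρ u} with hA
  set B := {u | t < cdt ν ρ u} with hB
  have hpre : (fun u => (cdt μ ρ u, cdt ν ρ u)) ⁻¹' {p : ℝ × ℝ | s < p.1 ∧ t < p.2}
      = A ∩ B := rfl
  rw [hpre]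
  have hAM : ρ (A ∩ B) = ρ ((A ∩ M) ∩ (B ∩ M)) := by
    rw [show (A ∩ M) ∩ (B ∩ M) = (A ∩ B) ∩ M by ext u; simp only [Set.mem_inter_iff]; tauto,
      measure_inter_conull hnull]
  have hup : ∀ (κ : Measure ℝ) (c : ℝ), IsProbabilityMeasure κ →
      ∀ a b, a ∈ {u | c < cdt κ ρ u} ∩ M → b ∈ M → a ≤ b → b ∈ {u | c < cdt κ ρ u} ∩ M := by
    intro κ c hκ a b ⟨haA, haM⟩ hbM hab
    exact ⟨lt_of_lt_of_le haA (cdt_monotoneOn κ ρ haM hbM hab), hbM⟩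
  have hmin := measure_inter_min_of_upsets_within ρ (M := M)
    (A := A ∩ M) (B := B ∩ M) Set.inter_subset_right Set.inter_subset_right
    (hup μ s inferInstance) (hup ν t inferInstance)
  rw [hAM, hmin, measure_inter_conull hnull, measure_inter_conull hnull]
  have h1 : ρ A = μ (Set.Ioi s) := by
    rw [← cdt_map μ ρ, Measure.map_apply_of_aemeasurable (cdt_aemeasurable μ ρ) measurableSet_Ioi]
    rfl
  have h2 : ρ B = ν (Set.Ioi t) := by
    rw [← cdt_map ν ρ, Measure.map_apply_of_aemeasurable (cdt_aemeasurable ν ρ) measurableSet_Ioi]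
    rfl
  rw [h1, h2]

end P4

noncomputable section P5
open scoped Real

/-- auxiliary "layer" function: `χ x s = 1_{s<x} - 1_{s<0}` -/
noncomputable def chi (x s : ℝ) : ℝ :=
  (if s < x then 1 else 0) - (if s < 0 then 1 else 0)

lemma chi_eq_indicator (x s : ℝ) :
    chi x s = (Set.Ico 0 x).indicator (fun _ => (1:ℝ)) s
      - (Set.Ico x 0).indicator (fun _ => (1:ℝ)) s := by
  rcases lt_or_ge s 0 with h0 | h0 <;> rcases lt_or_ge s x with h1 | h1
  · rw [Set.indicator_of_notMem (by simp [Set.mem_Ico]; intro h; linarith),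
      Set.indicator_of_notMem (by simp [Set.mem_Ico]; intro h; linarith)]
    simp [chi, h0, h1]
  · rw [Set.indicator_of_notMem (by simp [Set.mem_Ico]; intro h; linarith),
      Set.indicator_of_mem (by simp [Set.mem_Ico]; exact ⟨h1, h0⟩)]
    simp [chi, h0, not_lt.2 h1]
  · rw [Set.indicator_of_mem (by simp [Set.mem_Ico]; exact ⟨h0, h1⟩),
      Set.indicator_of_notMem (by simp [Set.mem_Ico]; intro h; linarith)]
    simp [chi, h1, not_lt.2 h0]
  · rw [Set.indicator_of_notMem (by simp [Set.mem_Ico]; intro h; linarith),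
      Set.indicator_of_notMem (by simp [Set.mem_Ico]; intro h; linarith)]
    simp [chi, not_lt.2 h0, not_lt.2 h1]

lemma abs_chi_eq_indicator (x s : ℝ) :
    |chi x s| = (Set.Ico 0 x).indicator (fun _ => (1:ℝ)) s
      + (Set.Ico x 0).indicator (fun _ => (1:ℝ)) s := by
  rw [chi_eq_indicator x s]
  rcases lt_or_ge s 0 with h0 | h0 <;> rcases lt_or_ge s x with h1 | h1 <;>
    simp only [Set.indicator_apply, Set.mem_Ico] <;> split_ifs with ha hb <;>
    first
      | (obtain ⟨ha1, ha2⟩ := ha; linarith)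
      | (obtain ⟨hb1, hb2⟩ := hb; linarith)
      | norm_num

lemma integrable_indicator_Ico (a b : ℝ) :
    Integrable ((Set.Ico a b).indicator (fun _ => (1:ℝ))) volume := by
  rw [integrable_indicator_iff measurableSet_Ico]
  exact integrableOn_const (by rw [Real.volume_Ico]; exact ENNReal.ofReal_ne_top)

lemma integrable_chi (x : ℝ) : Integrable (chi x) volume := by
  have := (integrable_indicator_Ico 0 x).sub (integrable_indicator_Ico x 0)
  exact this.congr (Eventually.of_forall fun s => (chi_eq_indicator x s).symm)

lemma integral_indicator_Ico (a b : ℝ) :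
    ∫ s, (Set.Ico a b).indicator (fun _ => (1:ℝ)) s = max (b - a) 0 := by
  rw [MeasureTheory.integral_indicator_const (1:ℝ) measurableSet_Ico, measureReal_def, Real.volume_Ico]
  simp only [smul_eq_mul, mul_one]
  rcases le_total (b - a) 0 with h | h
  · rw [ENNReal.ofReal_eq_zero.2 h, max_eq_right h]; simp
  · rw [ENNReal.toReal_ofReal h, max_eq_left h]

lemma integral_chi (x : ℝ) : ∫ s, chi x s = x := by
  have h : (fun s => chi x s) = fun s => (Set.Ico 0 x).indicator (fun _ => (1:ℝ)) s
      - (Set.Ico x 0).indicator (fun _ => (1:ℝ)) s := funext (chi_eq_indicator x)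
  rw [h, integral_sub (integrable_indicator_Ico 0 x) (integrable_indicator_Ico x 0),
    integral_indicator_Ico, integral_indicator_Ico]
  rcases le_total 0 x with hx | hx
  · rw [max_eq_left (by linarith), max_eq_right (by linarith)]; ring
  · rw [max_eq_right (by linarith), max_eq_left (by linarith)]; ring

lemma integral_abs_chi (x : ℝ) : ∫ s, |chi x s| = |x| := by
  have h : (fun s => |chi x s|) = fun s => (Set.Ico 0 x).indicator (fun _ => (1:ℝ)) s
      + (Set.Ico x 0).indicator (fun _ => (1:ℝ)) s := funext (abs_chi_eq_indicator x)
  rw [h, integral_add (integrable_indicator_Ico 0 x) (integrable_indicator_Ico x 0),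
    integral_indicator_Ico, integral_indicator_Ico]
  rcases le_total 0 x with hx | hx
  · rw [max_eq_left (by linarith), max_eq_right (by linarith), abs_of_nonneg hx]; ring
  · rw [max_eq_right (by linarith), max_eq_left (by linarith), abs_of_nonpos hx]; ring

lemma measurable_chi_uncurry : Measurable (fun q : ℝ × ℝ => chi q.1 q.2) := by
  unfold chi
  apply Measurable.sub
  · exact Measurable.ite (measurableSet_lt measurable_snd measurable_fst)
      measurable_const measurable_const
  · exact Measurable.ite (measurableSet_lt measurable_snd measurable_const)
      measurable_const measurable_const

lemma abs_chi_le_one (x s : ℝ) : |chi x s| ≤ 1 := by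
  simp only [chi]; split_ifs <;> norm_num

end P5

noncomputable section P6
open Set

variable {μ ν : Measure ℝ}

lemma coupling_isProb [IsProbabilityMeasure μ] {π' : Measure (ℝ × ℝ)}
    (hfst : Measure.map Prod.fst π' = μ) : IsProbabilityMeasure π' := by
  constructor
  have h := congrArg (fun m : Measure ℝ => m Set.univ) hfst
  simp only [Measure.map_apply measurable_fst MeasurableSet.univ, Set.preimage_univ,
    measure_univ] at h
  exact h

end P6

noncomputable section P7
open Set

/-- product Lebesgue measure on the plane -/
noncomputable def σm : Measure (ℝ × ℝ) := (volume : Measure ℝ).prod volume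

instance : SFinite σm := inferInstanceAs (SFinite ((volume : Measure ℝ).prod volume))

variable {μ ν : Measure ℝ} [IsProbabilityMeasure μ] [IsProbabilityMeasure ν]
variable {π' : Measure (ℝ × ℝ)}

lemma integrable_sq_fst (hfst : π'.map Prod.fst = μ) (hμ2 : MemLp (id : ℝ → ℝ) 2 μ) :
    Integrable (fun p : ℝ × ℝ => p.1 ^ 2) π' := by
  have h1 : Integrable (fun x : ℝ => x ^ 2) μ := by simpa using hμ2.integrable_sq
  rw [← hfst] at h1
  exact (integrable_map_measure (measurable_id.pow_const 2).aestronglyMeasurable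
    measurable_fst.aemeasurable).1 h1

lemma integrable_sq_snd (hsnd : π'.map Prod.snd = ν) (hν2 : MemLp (id : ℝ → ℝ) 2 ν) :
    Integrable (fun p : ℝ × ℝ => p.2 ^ 2) π' := by
  have h1 : Integrable (fun x : ℝ => x ^ 2) ν := by simpa using hν2.integrable_sq
  rw [← hsnd] at h1
  exact (integrable_map_measure (measurable_id.pow_const 2).aestronglyMeasurable
    measurable_snd.aemeasurable).1 h1

lemma integrable_mul_couple (hfst : π'.map Prod.fst = μ) (hsnd : π'.map Prod.snd = ν)
    (hμ2 : MemLp (id : ℝ → ℝ) 2 μ) (hν2 : MemLp (id : ℝ → ℝ) 2 ν) :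
    Integrable (fun p : ℝ × ℝ => p.1 * p.2) π' := by
  have hsq1 := integrable_sq_fst hfst hμ2
  have hsq2 := integrable_sq_snd hsnd hν2
  refine ((hsq1.add hsq2).div_const 2).mono'
    (measurable_fst.mul measurable_snd).aestronglyMeasurable ?_
  refine Eventually.of_forall fun p => ?_
  simp only [Pi.add_apply, Real.norm_eq_abs, abs_mul]
  nlinarith [sq_nonneg (|p.1| - |p.2|), sq_abs p.1, sq_abs p.2, abs_nonneg p.1, abs_nonneg p.2]

lemma integrable_abs_mul_couple (hfst : π'.map Prod.fst = μ) (hsnd : π'.map Prod.snd = ν)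
    (hμ2 : MemLp (id : ℝ → ℝ) 2 μ) (hν2 : MemLp (id : ℝ → ℝ) 2 ν) :
    Integrable (fun p : ℝ × ℝ => |p.1| * |p.2|) π' := by
  have h := (integrable_mul_couple hfst hsnd hμ2 hν2).abs
  exact h.congr (Eventually.of_forall fun p => by simp only [abs_mul])

/-- the integrand of the Hoeffding representation -/
noncomputable def kfun (π' : Measure (ℝ × ℝ)) (z : ℝ × ℝ) : ℝ :=
  ∫ p, chi p.1 z.1 * chi p.2 z.2 ∂π'

noncomputable def cterm (μ ν : Measure ℝ) (z : ℝ × ℝ) : ℝ :=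
  (if z.1 < 0 then (1:ℝ) else 0) * (ν (Set.Ioi z.2)).toReal
  + (if z.2 < 0 then (1:ℝ) else 0) * (μ (Set.Ioi z.1)).toReal
  - (if z.1 < 0 then (1:ℝ) else 0) * (if z.2 < 0 then (1:ℝ) else 0)

lemma kfun_eq (hfst : π'.map Prod.fst = μ) (hsnd : π'.map Prod.snd = ν) (z : ℝ × ℝ) :
    kfun π' z = (π' {p : ℝ × ℝ | z.1 < p.1 ∧ z.2 < p.2}).toReal - cterm μ ν z := by
  haveI : IsProbabilityMeasure π' := coupling_isProb hfst
  obtain ⟨s, t⟩ := z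
  set E : Set (ℝ × ℝ) := {p : ℝ × ℝ | s < p.1 ∧ t < p.2} with hEdef
  set A : Set (ℝ × ℝ) := Prod.fst ⁻¹' Set.Ioi s with hAdef
  set B : Set (ℝ × ℝ) := Prod.snd ⁻¹' Set.Ioi t with hBdef
  have hE : MeasurableSet E :=
    (measurable_fst measurableSet_Ioi).inter (measurable_snd measurableSet_Ioi)
  have hA : MeasurableSet A := measurable_fst measurableSet_Ioi
  have hB : MeasurableSet B := measurable_snd measurableSet_Ioi
  have iE : Integrable (E.indicator fun _ => (1:ℝ)) π' := by
    rw [integrable_indicator_iff hE]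
    exact integrableOn_const (measure_ne_top π' _)
  have iA : Integrable (A.indicator fun _ => (1:ℝ)) π' := by
    rw [integrable_indicator_iff hA]
    exact integrableOn_const (measure_ne_top π' _)
  have iB : Integrable (B.indicator fun _ => (1:ℝ)) π' := by
    rw [integrable_indicator_iff hB]
    exact integrableOn_const (measure_ne_top π' _)
  have hexp : (fun p : ℝ × ℝ => chi p.1 s * chi p.2 t) =
      fun p => (E.indicator (fun _ => (1:ℝ)) p
          - (if t < 0 then (1:ℝ) else 0) * A.indicator (fun _ => (1:ℝ)) p)
        - ((if s < 0 then (1:ℝ) else 0) * B.indicator (fun _ => (1:ℝ)) p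
          - (if s < 0 then (1:ℝ) else 0) * (if t < 0 then (1:ℝ) else 0)) := by
    funext p
    have h1 : E.indicator (fun _ => (1:ℝ)) p
        = (if s < p.1 then (1:ℝ) else 0) * (if t < p.2 then (1:ℝ) else 0) := by
      simp only [Set.indicator_apply, hEdef, Set.mem_setOf_eq]
      split_ifs <;> first | tauto | norm_num
    have h2 : A.indicator (fun _ => (1:ℝ)) p = (if s < p.1 then (1:ℝ) else 0) := by
      by_cases h : s < p.1
      · rw [Set.indicator_of_mem (by simpa [hAdef] using h), if_pos h]
      · rw [Set.indicator_of_notMem (by simpa [hAdef] using h), if_neg h]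
    have h3 : B.indicator (fun _ => (1:ℝ)) p = (if t < p.2 then (1:ℝ) else 0) := by
      by_cases h : t < p.2
      · rw [Set.indicator_of_mem (by simpa [hBdef] using h), if_pos h]
      · rw [Set.indicator_of_notMem (by simpa [hBdef] using h), if_neg h]
    rw [h1, h2, h3]
    simp only [chi]
    ring
  have hπA : π' A = μ (Set.Ioi s) := by
    rw [← hfst, Measure.map_apply measurable_fst measurableSet_Ioi]
  have hπB : π' B = ν (Set.Ioi t) := by
    rw [← hsnd, Measure.map_apply measurable_snd measurableSet_Ioi]
  have i2 : Integrable (fun p : ℝ × ℝ =>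
      (if t < 0 then (1:ℝ) else 0) * A.indicator (fun _ => (1:ℝ)) p) π' := by
    exact iA.const_mul _
  have i3 : Integrable (fun p : ℝ × ℝ =>
      (if s < 0 then (1:ℝ) else 0) * B.indicator (fun _ => (1:ℝ)) p) π' := by
    exact iB.const_mul _
  have i1 : Integrable (fun p : ℝ × ℝ => E.indicator (fun _ => (1:ℝ)) p
      - (if t < 0 then (1:ℝ) else 0) * A.indicator (fun _ => (1:ℝ)) p) π' := by
    exact iE.sub i2
  have i4 : Integrable (fun p : ℝ × ℝ =>
      (if s < 0 then (1:ℝ) else 0) * B.indicator (fun _ => (1:ℝ)) p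
      - (if s < 0 then (1:ℝ) else 0) * (if t < 0 then (1:ℝ) else 0)) π' := by
    exact i3.sub (integrable_const _)
  rw [kfun, hexp, integral_sub i1 i4,
    integral_sub iE i2, integral_sub i3 (integrable_const _),
    integral_const_mul, integral_const_mul,
    MeasureTheory.integral_indicator_const (1:ℝ) hE,
    MeasureTheory.integral_indicator_const (1:ℝ) hA,
    MeasureTheory.integral_indicator_const (1:ℝ) hB,
    integral_const]
  simp only [smul_eq_mul, mul_one, measureReal_def, measure_univ, ENNReal.toReal_one, one_mul]
  rw [hπA, hπB, cterm]
  ring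

lemma integrable_F (hfst : π'.map Prod.fst = μ) (hsnd : π'.map Prod.snd = ν)
    (hμ2 : MemLp (id : ℝ → ℝ) 2 μ) (hν2 : MemLp (id : ℝ → ℝ) 2 ν) :
    Integrable (fun q : (ℝ × ℝ) × (ℝ × ℝ) => chi q.1.1 q.2.1 * chi q.1.2 q.2.2)
      (π'.prod σm) := by
  haveI : IsProbabilityMeasure π' := coupling_isProb hfst
  have hmeas : AEStronglyMeasurable
      (fun q : (ℝ × ℝ) × (ℝ × ℝ) => chi q.1.1 q.2.1 * chi q.1.2 q.2.2) (π'.prod σm) := by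
    apply Measurable.aestronglyMeasurable
    exact (measurable_chi_uncurry.comp
        ((measurable_fst.fst).prodMk (measurable_snd.fst))).mul
      (measurable_chi_uncurry.comp ((measurable_fst.snd).prodMk (measurable_snd.snd)))
  refine (integrable_prod_iff hmeas).2 ⟨?_, ?_⟩
  · refine Eventually.of_forall fun p => ?_
    exact (integrable_chi p.1).mul_prod (integrable_chi p.2)
  · have heq : (fun p : ℝ × ℝ => ∫ z : ℝ × ℝ, ‖chi p.1 z.1 * chi p.2 z.2‖ ∂σm)
        = fun p : ℝ × ℝ => |p.1| * |p.2| := by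
      funext p
      have : (fun z : ℝ × ℝ => ‖chi p.1 z.1 * chi p.2 z.2‖)
          = fun z : ℝ × ℝ => |chi p.1 z.1| * |chi p.2 z.2| := by
        funext z; rw [Real.norm_eq_abs, abs_mul]
      rw [this, σm, integral_prod_mul (fun a => |chi p.1 a|) (fun b => |chi p.2 b|),
        integral_abs_chi, integral_abs_chi]
    rw [heq]
    exact integrable_abs_mul_couple hfst hsnd hμ2 hν2

lemma integrable_kfun (hfst : π'.map Prod.fst = μ) (hsnd : π'.map Prod.snd = ν)
    (hμ2 : MemLp (id : ℝ → ℝ) 2 μ) (hν2 : MemLp (id : ℝ → ℝ) 2 ν) :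
    Integrable (kfun π') σm := by
  haveI : IsProbabilityMeasure π' := coupling_isProb hfst
  have h := (integrable_F hfst hsnd hμ2 hν2).integral_prod_right
  exact h

lemma hoeffding_repr (hfst : π'.map Prod.fst = μ) (hsnd : π'.map Prod.snd = ν)
    (hμ2 : MemLp (id : ℝ → ℝ) 2 μ) (hν2 : MemLp (id : ℝ → ℝ) 2 ν) :
    ∫ p : ℝ × ℝ, p.1 * p.2 ∂π' = ∫ z : ℝ × ℝ, kfun π' z ∂σm := by
  haveI : IsProbabilityMeasure π' := coupling_isProb hfst
  have hswap := MeasureTheory.integral_integral_swap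
    (f := fun (p : ℝ × ℝ) (z : ℝ × ℝ) => chi p.1 z.1 * chi p.2 z.2)
    (μ := π') (ν := σm) (integrable_F hfst hsnd hμ2 hν2)
  have hinner : ∀ p : ℝ × ℝ, ∫ z : ℝ × ℝ, chi p.1 z.1 * chi p.2 z.2 ∂σm = p.1 * p.2 := by
    intro p
    rw [σm, integral_prod_mul (fun a => chi p.1 a) (fun b => chi p.2 b),
      integral_chi, integral_chi]
  calc ∫ p : ℝ × ℝ, p.1 * p.2 ∂π'
      = ∫ p : ℝ × ℝ, ∫ z : ℝ × ℝ, chi p.1 z.1 * chi p.2 z.2 ∂σm ∂π' := by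
        refine integral_congr_ae (Eventually.of_forall fun p => ?_)
        exact (hinner p).symm
    _ = ∫ z : ℝ × ℝ, kfun π' z ∂σm := hswap

end P7

noncomputable section P8
open Set

variable {μ ν ρ : Measure ℝ} [IsProbabilityMeasure μ] [IsProbabilityMeasure ν]
  [IsProbabilityMeasure ρ] [NullSingletonClass ρ]
variable {π' : Measure (ℝ × ℝ)}

lemma cross_le (hfst : π'.map Prod.fst = μ) (hsnd : π'.map Prod.snd = ν)
    (hμ2 : MemLp (id : ℝ → ℝ) 2 μ) (hν2 : MemLp (id : ℝ → ℝ) 2 ν) :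
    ∫ p : ℝ × ℝ, p.1 * p.2 ∂π' ≤ ∫ p : ℝ × ℝ, p.1 * p.2 ∂(qcoupling μ ν ρ) := by
  have hfst0 := qcoupling_fst μ ν ρ
  have hsnd0 := qcoupling_snd μ ν ρ
  rw [hoeffding_repr hfst hsnd hμ2 hν2, hoeffding_repr hfst0 hsnd0 hμ2 hν2]
  refine integral_mono (integrable_kfun hfst hsnd hμ2 hν2)
    (integrable_kfun hfst0 hsnd0 hμ2 hν2) fun z => ?_
  rw [kfun_eq hfst hsnd z, kfun_eq hfst0 hsnd0 z]
  refine sub_le_sub_right ?_ _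
  refine ENNReal.toReal_mono (measure_ne_top _ _) ?_
  rw [qcoupling_joint μ ν ρ z.1 z.2]
  refine le_min ?_ ?_
  · calc π' {p : ℝ × ℝ | z.1 < p.1 ∧ z.2 < p.2}
        ≤ π' (Prod.fst ⁻¹' Set.Ioi z.1) := measure_mono fun p hp => hp.1
      _ = μ (Set.Ioi z.1) := by
        rw [← hfst, Measure.map_apply measurable_fst measurableSet_Ioi]
  · calc π' {p : ℝ × ℝ | z.1 < p.1 ∧ z.2 < p.2}
        ≤ π' (Prod.snd ⁻¹' Set.Ioi z.2) := measure_mono fun p hp => hp.2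
      _ = ν (Set.Ioi z.2) := by
        rw [← hsnd, Measure.map_apply measurable_snd measurableSet_Ioi]

lemma integral_sq_fst_eq (hfst : π'.map Prod.fst = μ) :
    ∫ p : ℝ × ℝ, p.1 ^ 2 ∂π' = ∫ x : ℝ, x ^ 2 ∂μ := by
  have hm : AEStronglyMeasurable (fun x : ℝ => x ^ 2) (Measure.map Prod.fst π') :=
    (measurable_id.pow_const 2).aestronglyMeasurable
  rw [← hfst, integral_map measurable_fst.aemeasurable hm]

lemma integral_sq_snd_eq (hsnd : π'.map Prod.snd = ν) :
    ∫ p : ℝ × ℝ, p.2 ^ 2 ∂π' = ∫ x : ℝ, x ^ 2 ∂ν := by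
  have hm : AEStronglyMeasurable (fun x : ℝ => x ^ 2) (Measure.map Prod.snd π') :=
    (measurable_id.pow_const 2).aestronglyMeasurable
  rw [← hsnd, integral_map measurable_snd.aemeasurable hm]

lemma integrable_sqdiff (hfst : π'.map Prod.fst = μ) (hsnd : π'.map Prod.snd = ν)
    (hμ2 : MemLp (id : ℝ → ℝ) 2 μ) (hν2 : MemLp (id : ℝ → ℝ) 2 ν) :
    Integrable (fun p : ℝ × ℝ => (p.1 - p.2) ^ 2) π' := by
  have h : (fun p : ℝ × ℝ => (p.1 - p.2) ^ 2)
      = fun p : ℝ × ℝ => p.1 ^ 2 - 2 * (p.1 * p.2) + p.2 ^ 2 := funext fun p => by ring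
  rw [h]
  exact ((integrable_sq_fst hfst hμ2).sub
    ((integrable_mul_couple hfst hsnd hμ2 hν2).const_mul 2)).add (integrable_sq_snd hsnd hν2)

lemma integral_sqdiff_expand (hfst : π'.map Prod.fst = μ) (hsnd : π'.map Prod.snd = ν)
    (hμ2 : MemLp (id : ℝ → ℝ) 2 μ) (hν2 : MemLp (id : ℝ → ℝ) 2 ν) :
    ∫ p : ℝ × ℝ, (p.1 - p.2) ^ 2 ∂π'
      = ∫ x : ℝ, x ^ 2 ∂μ + ∫ x : ℝ, x ^ 2 ∂ν - 2 * ∫ p : ℝ × ℝ, p.1 * p.2 ∂π' := by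
  have h : (fun p : ℝ × ℝ => (p.1 - p.2) ^ 2)
      = fun p : ℝ × ℝ => (p.1 ^ 2 - 2 * (p.1 * p.2)) + p.2 ^ 2 := funext fun p => by ring
  have i1 := integrable_sq_fst hfst hμ2
  have i2 := integrable_sq_snd hsnd hν2
  have im := integrable_mul_couple hfst hsnd hμ2 hν2
  have im2 : Integrable (fun p : ℝ × ℝ => 2 * (p.1 * p.2)) π' := by exact im.const_mul 2
  have i12 : Integrable (fun p : ℝ × ℝ => p.1 ^ 2 - 2 * (p.1 * p.2)) π' := by exact i1.sub im2
  rw [h, integral_add i12 i2, integral_sub i1 im2, integral_const_mul,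
    integral_sq_fst_eq hfst, integral_sq_snd_eq hsnd]
  ring

lemma lintegral_cost_eq (hfst : π'.map Prod.fst = μ) (hsnd : π'.map Prod.snd = ν)
    (hμ2 : MemLp (id : ℝ → ℝ) 2 μ) (hν2 : MemLp (id : ℝ → ℝ) 2 ν) :
    ∫⁻ p : ℝ × ℝ, ENNReal.ofReal ((p.1 - p.2) ^ 2) ∂π'
      = ENNReal.ofReal (∫ p : ℝ × ℝ, (p.1 - p.2) ^ 2 ∂π') :=
  (ofReal_integral_eq_lintegral_ofReal (integrable_sqdiff hfst hsnd hμ2 hν2)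
    (Eventually.of_forall fun p => sq_nonneg _)).symm

lemma W2sq_eq_qcoupling (hμ2 : MemLp (id : ℝ → ℝ) 2 μ) (hν2 : MemLp (id : ℝ → ℝ) 2 ν) :
    W2sq μ ν = ∫⁻ p : ℝ × ℝ, ENNReal.ofReal ((p.1 - p.2) ^ 2) ∂(qcoupling μ ν ρ) := by
  have hfst0 := qcoupling_fst μ ν ρ
  have hsnd0 := qcoupling_snd μ ν ρ
  refine le_antisymm (sInf_le ⟨qcoupling μ ν ρ, hfst0, hsnd0, rfl⟩) (le_sInf ?_)
  rintro c ⟨π', hfst, hsnd, rfl⟩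
  rw [lintegral_cost_eq hfst hsnd hμ2 hν2, lintegral_cost_eq hfst0 hsnd0 hμ2 hν2]
  refine ENNReal.ofReal_le_ofReal ?_
  rw [integral_sqdiff_expand hfst hsnd hμ2 hν2, integral_sqdiff_expand hfst0 hsnd0 hμ2 hν2]
  have := cross_le (ρ := ρ) hfst hsnd hμ2 hν2
  linarith

end P8


/-- For probability measures `μ, ν` on `ℝ` with finite second moments and an atom-free
reference probability measure `ρ`, the `L²(ρ)` distance between the CDTs `μ̂` and `ν̂`
equals the Wasserstein-2 distance `W₂(μ,ν)`. -/
theorem cdt_dist_eq_wasserstein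
    (μ ν : Measure ℝ) [IsProbabilityMeasure μ] [IsProbabilityMeasure ν]
    (hμ : MemLp (id : ℝ → ℝ) 2 μ) (hν : MemLp (id : ℝ → ℝ) 2 ν)
    (ρ : Measure ℝ) [IsProbabilityMeasure ρ] [NullSingletonClass ρ] :
    eLpNorm (fun t => cdt μ ρ t - cdt ν ρ t) 2 ρ = (W2sq μ ν) ^ (1/2 : ℝ) := by
  have hpt : ∀ x : ℝ, (‖x‖ₑ ^ (2:ℕ)) = ENNReal.ofReal (x ^ 2) := by
    intro x
    rw [Real.enorm_eq_ofReal_abs, ← ENNReal.ofReal_pow (abs_nonneg x), sq_abs]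
  have hlhs : eLpNorm (fun t => cdt μ ρ t - cdt ν ρ t) 2 ρ
      = (∫⁻ t : ℝ, ENNReal.ofReal ((cdt μ ρ t - cdt ν ρ t) ^ 2) ∂ρ) ^ (1/2 : ℝ) := by
    rw [eLpNorm_eq_lintegral_rpow_enorm_toReal (by norm_num) (by norm_num)]
    norm_num
    congr 1
    refine lintegral_congr fun t => ?_
    exact hpt _
  have hmap : ∫⁻ t : ℝ, ENNReal.ofReal ((cdt μ ρ t - cdt ν ρ t) ^ 2) ∂ρ
      = ∫⁻ p : ℝ × ℝ, ENNReal.ofReal ((p.1 - p.2) ^ 2) ∂(qcoupling μ ν ρ) := by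
    rw [qcoupling, lintegral_map' (f := fun p : ℝ × ℝ => ENNReal.ofReal ((p.1 - p.2) ^ 2))
      (((measurable_fst.sub measurable_snd).pow_const 2).ennreal_ofReal).aemeasurable
      (qcoupling_pair_aemeasurable μ ν ρ)]
  rw [hlhs, hmap, ← W2sq_eq_qcoupling hμ hν]

end
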